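/- Let Σ be an F-spanning set for Γ. Given any three words w_1, w_2, w_3 over Σ all of the same length m such that [w_1]_F + [w_2]_F + [w_3]_F ∈ F(Γ), there is a word u over Σ of length m such that [w_1]_F + [w_2]_F + [w_3]_F = F([u]_F). -/

import Mathlib

open Pointwise

/-- `[w]_F`: the base-`F` evaluation of a word `w = x₀x₁⋯x_m`,
namely `x₀ + F x₁ + ⋯ + F^m x_m`, with `[∅]_F = 0`. -/
def wordVal {Γ : Type*} [AddCommGroup Γ] (F : AddMonoid.End Γ) : List Γ → Γ
  | [] => 0
  | x :: xs => x + F (wordVal F xs)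

/-- `Sig` is an `F`-spanning set for `Γ`. -/
def IsSpanningSet {Γ : Type*} [AddCommGroup Γ] (F : AddMonoid.End Γ) (Sig : Set Γ) : Prop :=
  Sig.Finite ∧
  (0 : Γ) ∈ Sig ∧ (∀ x ∈ Sig, -x ∈ Sig) ∧
  (∀ x : Γ, F x ∈ Sig → x ∈ Sig) ∧
  (∀ x : Γ, ∃ w : List Γ, (∀ y ∈ w, y ∈ Sig) ∧ wordVal F w = x) ∧
  (∀ x₁ ∈ Sig, ∀ x₂ ∈ Sig, ∀ x₃ ∈ Sig, ∀ x₄ ∈ Sig, ∀ x₅ ∈ Sig,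
    ∃ t ∈ Sig, ∃ t' ∈ Sig, x₁ + x₂ + x₃ + x₄ + x₅ = t + F t') ∧
  (∀ x₁ ∈ Sig, ∀ x₂ ∈ Sig, ∀ x₃ ∈ Sig,
    (∃ y : Γ, x₁ + x₂ + x₃ = F y) → ∃ t ∈ Sig, x₁ + x₂ + x₃ = F t)

lemma aux_t_plus_three {Γ : Type*} [AddCommGroup Γ]
    (F : AddMonoid.End Γ) (Sig : Set Γ) (hSig : IsSpanningSet F Sig) :
    ∀ n : ℕ, ∀ t ∈ Sig, ∀ w₁ w₂ w₃ : List Γ,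
      (∀ x ∈ w₁, x ∈ Sig) → (∀ x ∈ w₂, x ∈ Sig) → (∀ x ∈ w₃, x ∈ Sig) →
      w₁.length = n → w₂.length = n → w₃.length = n →
      ∃ u : List Γ, (∀ x ∈ u, x ∈ Sig) ∧ u.length = n + 1 ∧
        wordVal F u = t + wordVal F w₁ + wordVal F w₂ + wordVal F w₃ := by
  obtain ⟨_, h0, _, _, _, h5, _⟩ := hSig
  intro n
  induction n with
  | zero =>
    intro t ht w₁ w₂ w₃ _ _ _ hl₁ hl₂ hl₃
    rw [List.length_eq_zero_iff] at hl₁ hl₂ hl₃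
    subst hl₁; subst hl₂; subst hl₃
    exact ⟨[t], by simpa using ht, rfl, by simp [wordVal]⟩
  | succ n ih =>
    intro t ht w₁ w₂ w₃ hw₁ hw₂ hw₃ hl₁ hl₂ hl₃
    obtain ⟨x₁, v₁, rfl⟩ := List.exists_cons_of_ne_nil (show w₁ ≠ [] by simp [← List.length_pos_iff_ne_nil, hl₁])
    obtain ⟨x₂, v₂, rfl⟩ := List.exists_cons_of_ne_nil (show w₂ ≠ [] by simp [← List.length_pos_iff_ne_nil, hl₂])
    obtain ⟨x₃, v₃, rfl⟩ := List.exists_cons_of_ne_nil (show w₃ ≠ [] by simp [← List.length_pos_iff_ne_nil, hl₃])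
    simp only [List.length_cons, Nat.add_right_cancel_iff] at hl₁ hl₂ hl₃
    obtain ⟨s, hs, s', hs', hss'⟩ := h5 t ht x₁ (hw₁ _ (by simp)) x₂ (hw₂ _ (by simp))
      x₃ (hw₃ _ (by simp)) 0 h0
    obtain ⟨u', hu'S, hu'l, hu'v⟩ := ih s' hs' v₁ v₂ v₃
      (fun x hx => hw₁ x (by simp [hx])) (fun x hx => hw₂ x (by simp [hx]))
      (fun x hx => hw₃ x (by simp [hx])) hl₁ hl₂ hl₃
    refine ⟨s :: u', ?_, by simp [hu'l], ?_⟩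
    · intro x hx
      rcases List.mem_cons.1 hx with rfl | hx
      · exact hs
      · exact hu'S x hx
    · rw [add_zero] at hss'
      show s + F (wordVal F u') = t + (x₁ + F (wordVal F v₁)) + (x₂ + F (wordVal F v₂))
        + (x₃ + F (wordVal F v₃))
      rw [hu'v, map_add, map_add, map_add]
      linear_combination (norm := abel) -hss'

/-- Given three words over an `F`-spanning set `Σ`, all of length `m`,
whose base-`F` values sum to an element of `F(Γ)`, the sum equals `F([u]_F)` for some
word `u` of length `m`. -/
theorem sum_three_words_in_image_eq_F_word {Γ : Type*} [AddCommGroup Γ]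
    (F : AddMonoid.End Γ) (Sig : Set Γ) (hSig : IsSpanningSet F Sig) (m : ℕ)
    (w₁ w₂ w₃ : List Γ)
    (hw₁ : ∀ x ∈ w₁, x ∈ Sig) (hw₂ : ∀ x ∈ w₂, x ∈ Sig) (hw₃ : ∀ x ∈ w₃, x ∈ Sig)
    (hl₁ : w₁.length = m) (hl₂ : w₂.length = m) (hl₃ : w₃.length = m)
    (hmem : ∃ y : Γ, wordVal F w₁ + wordVal F w₂ + wordVal F w₃ = F y) :
    ∃ u : List Γ, (∀ x ∈ u, x ∈ Sig) ∧ u.length = m ∧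
      wordVal F w₁ + wordVal F w₂ + wordVal F w₃ = F (wordVal F u) := by
  cases m with
  | zero =>
    rw [List.length_eq_zero_iff] at hl₁ hl₂ hl₃
    subst hl₁; subst hl₂; subst hl₃
    exact ⟨[], by simp, rfl, by simp [wordVal]⟩
  | succ n =>
    obtain ⟨x₁, v₁, rfl⟩ := List.exists_cons_of_ne_nil (show w₁ ≠ [] by simp [← List.length_pos_iff_ne_nil, hl₁])
    obtain ⟨x₂, v₂, rfl⟩ := List.exists_cons_of_ne_nil (show w₂ ≠ [] by simp [← List.length_pos_iff_ne_nil, hl₂])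
    obtain ⟨x₃, v₃, rfl⟩ := List.exists_cons_of_ne_nil (show w₃ ≠ [] by simp [← List.length_pos_iff_ne_nil, hl₃])
    simp only [List.length_cons, Nat.add_right_cancel_iff] at hl₁ hl₂ hl₃
    obtain ⟨y, hy⟩ := hmem
    have hx₁ := hw₁ x₁ (by simp)
    have hx₂ := hw₂ x₂ (by simp)
    have hx₃ := hw₃ x₃ (by simp)
    have h6 := hSig.2.2.2.2.2.2
    have hFim : ∃ z : Γ, x₁ + x₂ + x₃ = F z := by
      refine ⟨y - (wordVal F v₁ + wordVal F v₂ + wordVal F v₃), ?_⟩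
      simp only [wordVal] at hy
      rw [map_sub, map_add, map_add, ← hy]
      abel
    obtain ⟨t, ht, hteq⟩ := h6 x₁ hx₁ x₂ hx₂ x₃ hx₃ hFim
    obtain ⟨u, huS, hul, huv⟩ := aux_t_plus_three F Sig hSig n t ht v₁ v₂ v₃
      (fun x hx => hw₁ x (by simp [hx])) (fun x hx => hw₂ x (by simp [hx]))
      (fun x hx => hw₃ x (by simp [hx])) hl₁ hl₂ hl₃
    refine ⟨u, huS, hul, ?_⟩
    rw [huv]
    simp only [wordVal, map_add]
    rw [← hteq]
    abel
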